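/- For each f ∈ C(∂U) there exists a unique function G ∈ C(K) such that Φ(G_U) = G_U on U and G(x) = f(x) for all x ∈ ∂U. -/

import Mathlib

open MeasureTheory Filter Topology ComplexOrder

/-- `Φ` is a Markov operator on the bounded Borel measurable functions on `U`:
for each `x` there is a Borel probability measure `P x` representing `Φ` at `x`. -/
def IsMarkovOperator {U : Type*} [MeasurableSpace U]
    (Φ : (U → ℂ) → (U → ℂ)) : Prop :=
  ∀ x : U, ∃ P : Measure U, IsProbabilityMeasure P ∧
    ∀ f : U → ℂ, Measurable f → (∃ C : ℝ, ∀ y, ‖f y‖ ≤ C) →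
      Φ f x = ∫ y, f y ∂P

/-- `Φ` has the strong Feller property: it maps bounded Borel measurable
functions to continuous functions. -/
def HasStrongFeller {U : Type*} [MeasurableSpace U] [TopologicalSpace U]
    (Φ : (U → ℂ) → (U → ℂ)) : Prop :=
  ∀ f : U → ℂ, Measurable f → (∃ C : ℝ, ∀ y, ‖f y‖ ≤ C) → Continuous (Φ f)

/-- Boundary condition (A): for each boundary point `x` there is a barrier
`h ∈ C(K)` with `h x = 0`, `h < 0` off `x`, and `Φ (h_U) ≥ h_U` on `U`. -/
def CondA {K : Type*} [TopologicalSpace K] (U : Set K)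
    (Φ : (↥U → ℂ) → (↥U → ℂ)) : Prop :=
  ∀ x ∈ Uᶜ, ∃ h : C(K, ℂ), h x = 0 ∧ (∀ y : K, y ≠ x → h y < 0) ∧
    ∀ u : ↥U, h u.1 ≤ Φ (fun v : ↥U => h v.1) u

/-- Maximum principle (B): every real-valued `g ∈ C(K)` with `Φ (g_U) ≥ g_U`
on `U` attaining its global maximum inside `U` is constant. -/
def CondB {K : Type*} [TopologicalSpace K] (U : Set K)
    (Φ : (↥U → ℂ) → (↥U → ℂ)) : Prop :=
  ∀ g : C(K, ℂ), (∀ x : K, (g x).im = 0) →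
    (∀ u : ↥U, g u.1 ≤ Φ (fun v : ↥U => g v.1) u) →
    (∃ z ∈ U, ∀ x : K, g x ≤ g z) →
    ∀ x y : K, g x = g y

set_option linter.unusedSectionVars false

namespace Stmt0Aux

variable {K : Type*} [MetricSpace K] [CompactSpace K] [MeasurableSpace K] [BorelSpace K]
variable {U : Set K} {Φ : (↥U → ℂ) → (↥U → ℂ)}

noncomputable def ker (hM : IsMarkovOperator Φ) (x : ↥U) : Measure ↥U := (hM x).choose

lemma ker_prob (hM : IsMarkovOperator Φ) (x : ↥U) : IsProbabilityMeasure (ker hM x) :=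
  (hM x).choose_spec.1

lemma ker_eq (hM : IsMarkovOperator Φ) (x : ↥U) {f : ↥U → ℂ} (hf : Measurable f)
    (hb : ∃ C : ℝ, ∀ y, ‖f y‖ ≤ C) : Φ f x = ∫ y, f y ∂(ker hM x) :=
  (hM x).choose_spec.2 f hf hb

lemma meas_cmp {g : K → ℝ} (hg : Measurable g) :
    Measurable (fun v : ↥U => ((g v.1 : ℝ) : ℂ)) :=
  Complex.measurable_ofReal.comp (hg.comp measurable_subtype_coe)

lemma bdd_cmp {g : K → ℝ} {C : ℝ} (hC : ∀ x, |g x| ≤ C) :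
    ∀ v : ↥U, ‖((g v.1 : ℝ) : ℂ)‖ ≤ C := fun v => by
  simpa [Complex.norm_real, Real.norm_eq_abs] using hC v.1

lemma integrable_ker (hM : IsMarkovOperator Φ) (x : ↥U) {g : ↥U → ℝ}
    (hg : Measurable g) {C : ℝ} (hC : ∀ y, |g y| ≤ C) :
    Integrable g (ker hM x) := by
  have : IsProbabilityMeasure (ker hM x) := ker_prob hM x
  exact (integrable_const C).mono' hg.aestronglyMeasurable
    (Eventually.of_forall (fun y => by simpa [Real.norm_eq_abs] using hC y))

/-- the real version of `Φ`, given by integration against the kernel. -/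
noncomputable def PhiR (hM : IsMarkovOperator Φ) (g : K → ℝ) (x : ↥U) : ℝ :=
  ∫ y, g y.1 ∂(ker hM x)

lemma Phi_real (hM : IsMarkovOperator Φ) {g : K → ℝ} (hg : Measurable g) {C : ℝ}
    (hC : ∀ x, |g x| ≤ C) (x : ↥U) :
    Φ (fun v : ↥U => ((g v.1 : ℝ) : ℂ)) x = ((PhiR hM g x : ℝ) : ℂ) := by
  rw [ker_eq hM x (meas_cmp hg) ⟨C, bdd_cmp hC⟩, PhiR]
  simpa using @integral_ofReal _ _ (ker hM x) ℂ _ (fun y : ↥U => g y.1)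

lemma PhiR_const (hM : IsMarkovOperator Φ) (c : ℝ) (x : ↥U) :
    PhiR hM (fun _ => c) x = c := by
  have := ker_prob hM x
  simp [PhiR]

lemma PhiR_mono (hM : IsMarkovOperator Φ) {g₁ g₂ : K → ℝ}
    (h1 : Measurable g₁) {C₁ : ℝ} (hC1 : ∀ x, |g₁ x| ≤ C₁)
    (h2 : Measurable g₂) {C₂ : ℝ} (hC2 : ∀ x, |g₂ x| ≤ C₂)
    (hle : ∀ x, g₁ x ≤ g₂ x) (x : ↥U) : PhiR hM g₁ x ≤ PhiR hM g₂ x :=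
  integral_mono
    (integrable_ker hM x (h1.comp measurable_subtype_coe) (fun y => hC1 y.1))
    (integrable_ker hM x (h2.comp measurable_subtype_coe) (fun y => hC2 y.1))
    (fun y => hle y.1)

lemma PhiR_bound (hM : IsMarkovOperator Φ) {g : K → ℝ} (hg : Measurable g) {C : ℝ}
    (hC : ∀ x, |g x| ≤ C) (x : ↥U) : |PhiR hM g x| ≤ C := by
  have h1 : PhiR hM g x ≤ C := by
    have := PhiR_mono hM hg hC (measurable_const (a := C))
      (C₂ := |C|) (fun _ => le_rfl) (fun y => (abs_le.1 (hC y)).2) x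
    simpa [PhiR_const hM C x] using this
  have h2 : -C ≤ PhiR hM g x := by
    have := PhiR_mono hM (measurable_const (a := -C)) (C₁ := |C|)
      (fun _ => by simp) hg hC (fun y => (abs_le.1 (hC y)).1) x
    simpa [PhiR_const hM (-C) x] using this
  exact abs_le.2 ⟨h2, h1⟩

lemma PhiR_continuous (hSF : HasStrongFeller Φ) (hM : IsMarkovOperator Φ)
    {g : K → ℝ} (hg : Measurable g) {C : ℝ} (hC : ∀ x, |g x| ≤ C) :
    Continuous (PhiR hM g) := by
  have h1 := hSF _ (meas_cmp hg) ⟨C, bdd_cmp hC⟩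
  have h2 : PhiR hM g = fun x => (Φ (fun v : ↥U => ((g v.1 : ℝ) : ℂ)) x).re := by
    funext x; rw [Phi_real hM hg hC x]; simp
  rw [h2]; exact Complex.continuous_re.comp h1

lemma PhiR_affine (hM : IsMarkovOperator Φ) {g : K → ℝ} (hg : Measurable g) {C : ℝ}
    (hC : ∀ x, |g x| ≤ C) (c a : ℝ) (x : ↥U) :
    PhiR hM (fun y => c + a * g y) x = c + a * PhiR hM g x := by
  have hint : Integrable (fun y : ↥U => g y.1) (ker hM x) :=
    integrable_ker hM x (hg.comp measurable_subtype_coe) (fun y => hC y.1)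
  have := ker_prob hM x
  unfold PhiR
  rw [integral_add (integrable_const c) (hint.const_mul a), integral_const,
    integral_const_mul]
  simp

lemma PhiR_sub (hM : IsMarkovOperator Φ) {g₁ g₂ : K → ℝ}
    (h1 : Measurable g₁) {C₁ : ℝ} (hC1 : ∀ x, |g₁ x| ≤ C₁)
    (h2 : Measurable g₂) {C₂ : ℝ} (hC2 : ∀ x, |g₂ x| ≤ C₂) (x : ↥U) :
    PhiR hM (fun y => g₁ y - g₂ y) x = PhiR hM g₁ x - PhiR hM g₂ x := by
  unfold PhiR
  exact integral_sub
    (integrable_ker hM x (h1.comp measurable_subtype_coe) (fun y => hC1 y.1))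
    (integrable_ker hM x (h2.comp measurable_subtype_coe) (fun y => hC2 y.1))

lemma cm_bdd {α : Type*} [TopologicalSpace α] [CompactSpace α] (g : C(α, ℝ)) :
    ∀ x, |g x| ≤ ‖g‖ := fun x => by
  simpa [Real.norm_eq_abs] using g.norm_coe_le_norm x

lemma maxPrinciple (hM : IsMarkovOperator Φ) (hB : CondB U Φ) {g : C(K, ℝ)}
    (hsub : ∀ u : ↥U, g u.1 ≤ PhiR hM (⇑g) u) {z : K} (hz : z ∈ U)
    (hmax : ∀ x, g x ≤ g z) : ∀ x y : K, g x = g y := by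
  have hmeas : Measurable ⇑g := g.continuous.measurable
  have key := hB ⟨fun x => ((g x : ℝ) : ℂ), Complex.continuous_ofReal.comp g.continuous⟩
    (fun x => by simp) ?_ ?_
  · intro x y
    have := key x y
    simpa using Complex.ofReal_inj.1 (by simpa using this)
  · intro u
    have := Phi_real hM hmeas (cm_bdd g) u
    simp only [ContinuousMap.coe_mk]
    rw [this]
    exact Complex.real_le_real.2 (hsub u)
  · exact ⟨z, hz, fun x => Complex.real_le_real.2 (hmax x)⟩

lemma comparison (hM : IsMarkovOperator Φ) (hB : CondB U Φ) (hne : ∃ a, a ∈ Uᶜ)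
    {u g : C(K, ℝ)} (hu : ∀ w : ↥U, u w.1 ≤ PhiR hM ⇑u w)
    (hg : ∀ w : ↥U, PhiR hM ⇑g w ≤ g w.1)
    (hb : ∀ x ∈ Uᶜ, u x ≤ g x) : ∀ x, u x ≤ g x := by
  obtain ⟨a, ha⟩ := hne
  by_contra hcon
  push_neg at hcon
  obtain ⟨x₀, hx₀⟩ := hcon
  set d : C(K, ℝ) := u - g with hd
  obtain ⟨z, -, hz⟩ := isCompact_univ.exists_isMaxOn (Set.nonempty_iff_univ_nonempty.1 ⟨a⟩)
    (d.continuous.continuousOn)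
  have hzmax : ∀ x, d x ≤ d z := fun x => hz (Set.mem_univ x)
  have hdz : 0 < d z := lt_of_lt_of_le (by simp [hd, sub_pos, hx₀]) (hzmax x₀)
  have hzU : z ∈ U := by
    by_contra h
    have : d z ≤ 0 := by simpa [hd, sub_nonpos] using hb z h
    linarith
  have hdsub : ∀ w : ↥U, d w.1 ≤ PhiR hM ⇑d w := by
    intro w
    have heq : PhiR hM ⇑d w = PhiR hM ⇑u w - PhiR hM ⇑g w := by
      have : ⇑d = fun y => u y - g y := by funext y; simp [hd]
      rw [this]
      exact PhiR_sub hM u.continuous.measurable (cm_bdd u) g.continuous.measurable (cm_bdd g) w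
    have h1 := hu w
    have h2 := hg w
    simp only [hd, ContinuousMap.sub_apply]
    rw [heq]; linarith
  have hconst := maxPrinciple hM hB hdsub hzU hzmax
  have h1 : d a = d z := hconst a z
  have h2 : d a ≤ 0 := by simpa [hd, sub_nonpos] using hb a ha
  linarith

lemma barrier (hA : CondA U Φ) (hM : IsMarkovOperator Φ) {x₀ : K} (hx₀ : x₀ ∈ Uᶜ) :
    ∃ h : C(K, ℝ), h x₀ = 0 ∧ (∀ y, y ≠ x₀ → h y < 0) ∧ (∀ y, h y ≤ 0) ∧
      ∀ w : ↥U, h w.1 ≤ PhiR hM ⇑h w := by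
  obtain ⟨h, h0, hneg, hsub⟩ := hA x₀ hx₀
  have him : ∀ y, (h y).im = 0 := by
    intro y
    by_cases hy : y = x₀
    · simp [hy, h0]
    · have := (Complex.lt_def.1 (hneg y hy)).2
      simpa using this
  refine ⟨⟨fun y => (h y).re, Complex.continuous_re.comp h.continuous⟩, ?_, ?_, ?_, ?_⟩
  · simp [h0]
  · intro y hy
    exact by simpa using (Complex.lt_def.1 (hneg y hy)).1
  · intro y
    by_cases hy : y = x₀
    · simp [hy, h0]
    · exact le_of_lt (by simpa using (Complex.lt_def.1 (hneg y hy)).1)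
  · intro w
    have hrepr : (fun v : ↥U => h v.1) = fun v : ↥U => (((h v.1).re : ℝ) : ℂ) := by
      funext v
      exact Complex.ext (by simp) (by simp [him])
    have hre : Measurable (fun y : K => (h y).re) :=
      (Complex.continuous_re.comp h.continuous).measurable
    have hbd : ∀ y : K, |(h y).re| ≤ ‖h‖ :=
      fun y => le_trans (Complex.abs_re_le_norm (h y)) (h.norm_coe_le_norm y)
    have := hsub w
    rw [hrepr, Phi_real hM hre hbd w] at this
    have := Complex.le_def.1 this
    simpa [ContinuousMap.coe_mk, PhiR] using this.1

lemma upperBarrier (hM : IsMarkovOperator Φ) (hA : CondA U Φ) (hUopen : IsOpen U)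
    (fR : C(↥(Uᶜ), ℝ)) (x₀ : ↥(Uᶜ)) {ε : ℝ} (hε : 0 < ε) :
    ∃ g : C(K, ℝ),
      (∀ w : ↥U, PhiR hM ⇑g w ≤ g w.1) ∧
      (∀ y : ↥(Uᶜ), fR y ≤ g y.1) ∧
      (g x₀.1 = fR x₀ + ε) ∧
      (∀ y : K, fR x₀ + ε ≤ g y) := by
  obtain ⟨h, h0, hneg, hle0, hsub⟩ := barrier hA hM x₀.2
  -- compact "bad set"
  have hUc : IsCompact (Uᶜ) := hUopen.isClosed_compl.isCompact
  haveI : CompactSpace ↥(Uᶜ) := isCompact_iff_compactSpace.1 hUc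
  set T : Set ↥(Uᶜ) := {y | fR x₀ + ε ≤ fR y} with hT
  have hTclosed : IsClosed T := isClosed_le continuous_const fR.continuous
  set S : Set K := Subtype.val '' T with hS
  have hScomp : IsCompact S := (hTclosed.isCompact).image continuous_subtype_val
  -- a positive lower bound for -h on S
  obtain ⟨δ, hδpos, hδ⟩ : ∃ δ : ℝ, 0 < δ ∧ ∀ y ∈ S, δ ≤ -h y := by
    rcases Set.eq_empty_or_nonempty S with hSe | hSne
    · exact ⟨1, one_pos, by simp [hSe]⟩
    · obtain ⟨ym, hymS, hym⟩ := hScomp.exists_isMinOn hSne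
        ((continuous_neg.comp h.continuous).continuousOn)
      have hymne : ym ≠ x₀.1 := by
        intro hc
        obtain ⟨y', hy', hval⟩ := hymS
        have : y' = x₀ := Subtype.ext (hval.trans hc)
        rw [this] at hy'
        have : fR x₀ + ε ≤ fR x₀ := hy'
        linarith
      refine ⟨-h ym, by simpa using hneg ym hymne, fun y hy => ?_⟩
      exact hym hy
  set Cfb : ℝ := 2 * ‖fR‖ / δ with hCfb
  have hCfb0 : 0 ≤ Cfb := div_nonneg (by positivity) hδpos.le
  refine ⟨⟨fun y => fR x₀ + ε - Cfb * h y,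
    (continuous_const.sub ((continuous_const.mul h.continuous)))⟩, ?_, ?_, ?_, ?_⟩
  · -- supersolution
    intro w
    have hrw : (fun y => fR x₀ + ε - Cfb * h y) = fun y => (fR x₀ + ε) + (-Cfb) * h y := by
      funext y; ring
    simp only [ContinuousMap.coe_mk]
    rw [hrw, PhiR_affine hM h.continuous.measurable (cm_bdd h) (fR x₀ + ε) (-Cfb) w]
    have := hsub w
    nlinarith [hsub w]
  · -- dominates fR on the boundary
    intro y
    by_cases hy : fR x₀ + ε ≤ fR y
    · have hyS : y.1 ∈ S := ⟨y, hy, rfl⟩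
      have h1 : fR y - fR x₀ ≤ 2 * ‖fR‖ := by
        have := cm_bdd fR y
        have := cm_bdd fR x₀
        have h2 := abs_le.1 (cm_bdd fR y)
        have h3 := abs_le.1 (cm_bdd fR x₀)
        linarith [h2.2, h3.1]
      have h4 : 2 * ‖fR‖ = Cfb * δ := by
        rw [hCfb, div_mul_cancel₀ _ hδpos.ne']
      have h5 : Cfb * δ ≤ Cfb * (-h y.1) := by
        apply mul_le_mul_of_nonneg_left (hδ y.1 hyS) hCfb0
      simp only [ContinuousMap.coe_mk]
      nlinarith
    · push_neg at hy
      have : 0 ≤ Cfb * (-h y.1) := mul_nonneg hCfb0 (by simpa using hle0 y.1)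
      simp only [ContinuousMap.coe_mk]
      nlinarith
  · simp [h0]
  · intro y
    have : 0 ≤ Cfb * (-h y) := mul_nonneg hCfb0 (by simpa using hle0 y)
    simp only [ContinuousMap.coe_mk]
    nlinarith

open scoped Classical in
noncomputable def psiR (hM : IsMarkovOperator Φ) (g : K → ℝ) : K → ℝ :=
  fun x => if hx : x ∈ U then PhiR hM g ⟨x, hx⟩ else g x

lemma psiR_mem (hM : IsMarkovOperator Φ) (g : K → ℝ) {x : K} (hx : x ∈ U) :
    psiR hM g x = PhiR hM g ⟨x, hx⟩ := dif_pos hx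

lemma psiR_not (hM : IsMarkovOperator Φ) (g : K → ℝ) {x : K} (hx : x ∉ U) :
    psiR hM g x = g x := dif_neg hx

lemma psiR_meas (hSF : HasStrongFeller Φ) (hM : IsMarkovOperator Φ) (hUopen : IsOpen U)
    {g : K → ℝ} (hg : Measurable g) {C : ℝ} (hC : ∀ x, |g x| ≤ C) :
    Measurable (psiR hM g) := by
  classical
  have h1 : Measurable (fun u : ↥U => PhiR hM g u) :=
    (PhiR_continuous hSF hM hg hC).measurable
  have h2 : Measurable (fun u : ↥(Uᶜ) => g u.1) := hg.comp measurable_subtype_coe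
  exact Measurable.dite h1 h2 hUopen.measurableSet

lemma psiR_bound (hM : IsMarkovOperator Φ) {g : K → ℝ} (hg : Measurable g) {C : ℝ}
    (hC : ∀ x, |g x| ≤ C) : ∀ x, |psiR hM g x| ≤ C := by
  intro x
  by_cases hx : x ∈ U
  · rw [psiR_mem hM g hx]; exact PhiR_bound hM hg hC _
  · rw [psiR_not hM g hx]; exact hC x

lemma psiR_mono (hM : IsMarkovOperator Φ) {g₁ g₂ : K → ℝ}
    (h1 : Measurable g₁) {C₁ : ℝ} (hC1 : ∀ x, |g₁ x| ≤ C₁)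
    (h2 : Measurable g₂) {C₂ : ℝ} (hC2 : ∀ x, |g₂ x| ≤ C₂)
    (hle : ∀ x, g₁ x ≤ g₂ x) : ∀ x, psiR hM g₁ x ≤ psiR hM g₂ x := by
  intro x
  by_cases hx : x ∈ U
  · rw [psiR_mem hM g₁ hx, psiR_mem hM g₂ hx]
    exact PhiR_mono hM h1 hC1 h2 hC2 hle _
  · rw [psiR_not hM g₁ hx, psiR_not hM g₂ hx]; exact hle x

lemma psiR_contOn (hSF : HasStrongFeller Φ) (hM : IsMarkovOperator Φ)
    {g : K → ℝ} (hg : Measurable g) {C : ℝ} (hC : ∀ x, |g x| ≤ C) :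
    ContinuousOn (psiR hM g) U := by
  rw [continuousOn_iff_continuous_restrict]
  have h : U.restrict (psiR hM g) = fun u : ↥U => PhiR hM g u := by
    funext u
    show psiR hM g u = _
    rw [psiR_mem hM g u.2]
  have h' : U.domRestrict (psiR hM g) = fun u : ↥U => PhiR hM g u := h
  rw [h']
  exact PhiR_continuous hSF hM hg hC

lemma exists_real (hUopen : IsOpen U) (hne : ∃ a, a ∈ Uᶜ)
    (hM : IsMarkovOperator Φ) (hSF : HasStrongFeller Φ) (hA : CondA U Φ) (hB : CondB U Φ)
    (fR : C(↥(Uᶜ), ℝ)) :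
    ∃ G : C(K, ℝ), (∀ w : ↥U, PhiR hM ⇑G w = G w.1) ∧ (∀ x : ↥(Uᶜ), G x.1 = fR x) := by
  obtain ⟨a, ha⟩ := hne
  haveI : Nonempty ↥(Uᶜ) := ⟨⟨a, ha⟩⟩
  haveI : CompactSpace ↥(Uᶜ) := isCompact_iff_compactSpace.1 hUopen.isClosed_compl.isCompact
  haveI hIne : Nonempty (↥(Uᶜ) × {q : ℝ // 0 < q}) := ⟨⟨⟨a, ha⟩, ⟨1, one_pos⟩⟩⟩
  choose gup hsup hbdry hval hlb using
    fun i : ↥(Uᶜ) × {q : ℝ // 0 < q} => upperBarrier hM hA hUopen fR i.1 i.2.2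
  set g₀ : K → ℝ := fun x => ⨅ i, gup i x with hg₀def
  have hlow : ∀ i y, -‖fR‖ ≤ gup i y := by
    intro i y
    refine le_trans ?_ (hlb i y)
    have h1 := (abs_le.1 (cm_bdd fR i.1)).1
    have := i.2.2
    linarith
  have hbddB : ∀ x : K, BddBelow (Set.range fun i => gup i x) := by
    intro x
    exact ⟨-‖fR‖, by rintro _ ⟨i, rfl⟩; exact hlow i x⟩
  have hg₀le : ∀ i x, g₀ x ≤ gup i x := fun i x => ciInf_le (hbddB x) i
  have hg₀ge : ∀ x, -‖fR‖ ≤ g₀ x := fun x => le_ciInf (fun i => hlow i x)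
  set i₀ : ↥(Uᶜ) × {q : ℝ // 0 < q} := ⟨⟨a, ha⟩, ⟨1, one_pos⟩⟩ with hi₀
  set C₀ : ℝ := ‖fR‖ + ‖gup i₀‖ with hC₀
  have hg₀bd : ∀ x, |g₀ x| ≤ C₀ := by
    intro x
    rw [abs_le]
    constructor
    · have := hg₀ge x; have := norm_nonneg (gup i₀); simp only [hC₀]; linarith
    · refine le_trans (hg₀le i₀ x) ?_
      have h1 := (abs_le.1 (cm_bdd (gup i₀) x)).2
      have := norm_nonneg fR
      simp only [hC₀]; linarith
  have hg₀meas : Measurable g₀ := by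
    apply measurable_of_Iio
    intro c
    have h : g₀ ⁻¹' (Set.Iio c) = ⋃ i, {x | gup i x < c} := by
      ext x
      simp only [Set.mem_preimage, Set.mem_Iio, Set.mem_iUnion, Set.mem_setOf_eq, hg₀def]
      exact ciInf_lt_iff (hbddB x)
    rw [h]
    exact (isOpen_iUnion (fun i => isOpen_lt (gup i).continuous continuous_const)).measurableSet
  have hg₀sup : ∀ w : ↥U, PhiR hM g₀ w ≤ g₀ w.1 := by
    intro w
    apply le_ciInf
    intro i
    calc PhiR hM g₀ w ≤ PhiR hM ⇑(gup i) w :=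
          PhiR_mono hM hg₀meas hg₀bd (gup i).continuous.measurable (cm_bdd (gup i))
            (fun x => hg₀le i x) w
      _ ≤ gup i w.1 := hsup i w
  have hg₀bdry : ∀ x : ↥(Uᶜ), g₀ x.1 = fR x := by
    intro x
    apply le_antisymm
    · apply le_of_forall_pos_le_add
      intro ε hε
      calc g₀ x.1 ≤ gup ⟨x, ⟨ε, hε⟩⟩ x.1 := hg₀le _ _
        _ = fR x + ε := hval ⟨x, ⟨ε, hε⟩⟩
    · exact le_ciInf (fun i => hbdry i x)
  -- the iteration
  set Gs : ℕ → K → ℝ := fun n => (psiR hM)^[n] g₀ with hGsdef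
  have hGs0 : Gs 0 = g₀ := rfl
  have hGsS : ∀ n, Gs (n + 1) = psiR hM (Gs n) := fun n => Function.iterate_succ_apply' _ _ _
  have hinv : ∀ n, Measurable (Gs n) ∧ ∀ x, |Gs n x| ≤ C₀ := by
    intro n
    induction n with
    | zero => exact ⟨hg₀meas, hg₀bd⟩
    | succ n ih =>
      rw [hGsS n]
      exact ⟨psiR_meas hSF hM hUopen ih.1 ih.2, psiR_bound hM ih.1 ih.2⟩
  have hanti : ∀ n x, Gs (n + 1) x ≤ Gs n x := by
    intro n
    induction n with
    | zero =>
      intro x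
      rw [hGsS 0, hGs0]
      by_cases hx : x ∈ U
      · rw [psiR_mem hM g₀ hx]; exact hg₀sup ⟨x, hx⟩
      · rw [psiR_not hM g₀ hx]
    | succ n ih =>
      intro x
      have hstep := psiR_mono hM (hinv (n + 1)).1 (hinv (n + 1)).2 (hinv n).1 (hinv n).2 ih x
      rw [hGsS n] at hstep
      rw [hGsS (n + 1), hGsS n]
      exact hstep
  have hsublow : ∀ (u : C(K, ℝ)), (∀ w : ↥U, u w.1 ≤ PhiR hM ⇑u w) →
      (∀ x : ↥(Uᶜ), u x.1 ≤ fR x) → ∀ n x, u x ≤ Gs n x := by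
    intro u hu hub n
    induction n with
    | zero =>
      intro x
      refine le_ciInf (fun i => ?_)
      exact comparison hM hB ⟨a, ha⟩ hu (hsup i)
        (fun y hy => le_trans (hub ⟨y, hy⟩) (hbdry i ⟨y, hy⟩)) x
    | succ n ih =>
      intro x
      have h1 : u x ≤ psiR hM ⇑u x := by
        by_cases hx : x ∈ U
        · rw [psiR_mem hM ⇑u hx]; exact hu ⟨x, hx⟩
        · rw [psiR_not hM ⇑u hx]
      refine le_trans h1 ?_
      rw [hGsS n]
      exact psiR_mono hM u.continuous.measurable (cm_bdd u) (hinv n).1 (hinv n).2 ih x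
  -- the limit
  set Glim : K → ℝ := fun x => ⨅ n, Gs n x with hGlimdef
  have hbddn : ∀ x, BddBelow (Set.range fun n => Gs n x) := by
    intro x
    exact ⟨-C₀, by rintro _ ⟨n, rfl⟩; exact (abs_le.1 ((hinv n).2 x)).1⟩
  have htends : ∀ x, Tendsto (fun n => Gs n x) atTop (𝓝 (Glim x)) := fun x =>
    tendsto_atTop_ciInf (antitone_nat_of_succ_le (fun n => hanti n x)) (hbddn x)
  have hGlmeas : Measurable Glim :=
    measurable_of_tendsto_metrizable' atTop (fun n => (hinv n).1) (tendsto_pi_nhds.2 htends)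
  have hGlbd : ∀ x, |Glim x| ≤ C₀ := by
    intro x
    rw [abs_le]
    exact ⟨le_ciInf (fun n => (abs_le.1 ((hinv n).2 x)).1),
      le_trans (ciInf_le (hbddn x) 0) (abs_le.1 ((hinv 0).2 x)).2⟩
  have hGlle : ∀ x, Glim x ≤ g₀ x := fun x => ciInf_le (hbddn x) 0
  -- the fixed point property
  have hfix : ∀ w : ↥U, PhiR hM Glim w = Glim w.1 := by
    intro w
    haveI := ker_prob hM w
    have hDC : Tendsto (fun n => PhiR hM (Gs n) w) atTop (𝓝 (PhiR hM Glim w)) := by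
      apply tendsto_integral_of_dominated_convergence (fun _ => C₀)
      · exact fun n => (((hinv n).1).comp measurable_subtype_coe).aestronglyMeasurable
      · exact integrable_const C₀
      · intro n
        exact Eventually.of_forall fun y => by
          simpa [Real.norm_eq_abs] using (hinv n).2 y.1
      · exact Eventually.of_forall fun y => htends y.1
    have h3 : ∀ n, PhiR hM (Gs n) w = Gs (n + 1) w.1 := by
      intro n
      rw [hGsS n, psiR_mem hM (Gs n) w.2]
    have h4 : Tendsto (fun n => Gs (n + 1) w.1) atTop (𝓝 (Glim w.1)) :=
      (htends w.1).comp (tendsto_add_atTop_nat 1)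
    have h2 : Tendsto (fun n => PhiR hM (Gs n) w) atTop (𝓝 (Glim w.1)) :=
      h4.congr (fun n => (h3 n).symm)
    exact tendsto_nhds_unique hDC h2
  -- boundary values
  have hsame : ∀ n (x : ↥(Uᶜ)), Gs n x.1 = g₀ x.1 := by
    intro n
    induction n with
    | zero => intro x; rfl
    | succ n ih =>
      intro x
      rw [hGsS n, psiR_not hM (Gs n) x.2]
      exact ih x
  have hGlbdry : ∀ x : ↥(Uᶜ), Glim x.1 = fR x := by
    intro x
    have h1 : Glim x.1 = g₀ x.1 := by
      have : (fun n => Gs n x.1) = fun _ : ℕ => g₀ x.1 := funext (fun n => hsame n x)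
      simp only [hGlimdef, this, ciInf_const]
    rw [h1]
    exact hg₀bdry x
  -- continuity
  have hcontU : ∀ x ∈ U, ContinuousAt Glim x := by
    have heq : Glim = psiR hM Glim := by
      funext x
      by_cases hx : x ∈ U
      · rw [psiR_mem hM Glim hx]; exact (hfix ⟨x, hx⟩).symm
      · rw [psiR_not hM Glim hx]
    intro x hx
    rw [heq]
    exact (psiR_contOn hSF hM hGlmeas hGlbd).continuousAt (hUopen.mem_nhds hx)
  have hcontB : ∀ x₀, ∀ hx₀ : x₀ ∈ Uᶜ, ContinuousAt Glim x₀ := by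
    intro x₀ hx₀
    have hGx₀ : Glim x₀ = fR ⟨x₀, hx₀⟩ := hGlbdry ⟨x₀, hx₀⟩
    unfold ContinuousAt
    rw [hGx₀, Metric.tendsto_nhds]
    intro ε' hε'
    have hε : 0 < ε' / 4 := by positivity
    set i : ↥(Uᶜ) × {q : ℝ // 0 < q} := ⟨⟨x₀, hx₀⟩, ⟨ε' / 4, hε⟩⟩ with hidef
    have hup : ∀ x, Glim x ≤ gup i x := fun x => le_trans (hGlle x) (hg₀le i x)
    obtain ⟨gl, hglsup, hglbdry, hglval, -⟩ := upperBarrier hM hA hUopen (-fR) ⟨x₀, hx₀⟩ hε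
    have husub : ∀ w : ↥U, (-gl : C(K, ℝ)) w.1 ≤ PhiR hM ⇑(-gl : C(K, ℝ)) w := by
      intro w
      have hrw : ⇑(-gl : C(K, ℝ)) = fun y => 0 + (-1) * gl y := by
        funext y; simp
      rw [hrw, PhiR_affine hM gl.continuous.measurable (cm_bdd gl) 0 (-1) w]
      have h6 := hglsup w
      simp only [ContinuousMap.neg_apply]
      linarith
    have hubdry : ∀ x : ↥(Uᶜ), (-gl : C(K, ℝ)) x.1 ≤ fR x := by
      intro x
      have h5 := hglbdry x
      simp only [ContinuousMap.neg_apply] at h5 ⊢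
      linarith
    have hlowB : ∀ x, (-gl : C(K, ℝ)) x ≤ Glim x :=
      fun x => le_ciInf (fun n => hsublow (-gl) husub hubdry n x)
    have huval : (-gl : C(K, ℝ)) x₀ = fR ⟨x₀, hx₀⟩ - ε' / 4 := by
      have h5 := hglval
      simp only [ContinuousMap.neg_apply] at h5 ⊢
      linarith
    have hgupval : gup i x₀ = fR ⟨x₀, hx₀⟩ + ε' / 4 := hval i
    have hopen1 : IsOpen {x | gup i x < fR ⟨x₀, hx₀⟩ + ε' / 2} :=
      isOpen_lt (gup i).continuous continuous_const
    have hmem1 : x₀ ∈ {x | gup i x < fR ⟨x₀, hx₀⟩ + ε' / 2} := by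
      simp only [Set.mem_setOf_eq, hgupval]; linarith
    have hopen2 : IsOpen {x | fR ⟨x₀, hx₀⟩ - ε' / 2 < (-gl : C(K, ℝ)) x} :=
      isOpen_lt continuous_const (-gl : C(K, ℝ)).continuous
    have hmem2 : x₀ ∈ {x | fR ⟨x₀, hx₀⟩ - ε' / 2 < (-gl : C(K, ℝ)) x} := by
      simp only [Set.mem_setOf_eq, huval]; linarith
    filter_upwards [hopen1.mem_nhds hmem1, hopen2.mem_nhds hmem2] with x h1 h2
    rw [Real.dist_eq, abs_lt]
    have h3 := hup x
    have h4 := hlowB x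
    have h1' : gup i x < fR ⟨x₀, hx₀⟩ + ε' / 2 := h1
    have h2' : fR ⟨x₀, hx₀⟩ - ε' / 2 < (-gl : C(K, ℝ)) x := h2
    constructor <;> linarith
  refine ⟨⟨Glim, continuous_iff_continuousAt.2 ?_⟩, ?_, ?_⟩
  · intro x
    by_cases hx : x ∈ U
    · exact hcontU x hx
    · exact hcontB x hx
  · intro w
    exact hfix w
  · intro x
    exact hGlbdry x

lemma integral_cmp (hM : IsMarkovOperator Φ) (x : ↥U) {g : K → ℝ} :
    ∫ y, ((g y.1 : ℝ) : ℂ) ∂(ker hM x) = ((PhiR hM g x : ℝ) : ℂ) := by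
  rw [PhiR]
  simpa using @integral_ofReal _ _ (ker hM x) ℂ _ (fun y : ↥U => g y.1)

lemma unique_zero (hM : IsMarkovOperator Φ) (hB : CondB U Φ) (hne : ∃ a, a ∈ Uᶜ)
    {D : C(K, ℂ)} (hfixD : ∀ u : ↥U, Φ (fun v : ↥U => D v.1) u = D u.1)
    (hbdryD : ∀ x ∈ Uᶜ, D x = 0) : ∀ x, D x = 0 := by
  have hmeasD : Measurable (fun v : ↥U => D v.1) :=
    (D.continuous.measurable).comp measurable_subtype_coe
  have hbdD : ∀ v : ↥U, ‖D v.1‖ ≤ ‖D‖ := fun v => D.norm_coe_le_norm v.1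
  have hint : ∀ x : ↥U, Integrable (fun y : ↥U => D y.1) (ker hM x) := fun x => by
    haveI := ker_prob hM x
    exact (integrable_const ‖D‖).mono' hmeasD.aestronglyMeasurable
      (Eventually.of_forall fun y => hbdD y)
  have zero_part : ∀ (p : ℂ → ℝ), Continuous p → (∀ z w : ℂ, p (z - w) = p z - p w) →
      (∀ (x : ↥U) (gg : ↥U → ℂ), Integrable gg (ker hM x) →
        ∫ y, p (gg y) ∂(ker hM x) = p (∫ y, gg y ∂(ker hM x))) →
      ∀ x, p (D x) = 0 := by
    intro p hpcont hpsub hpint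
    set DP : C(K, ℝ) := ⟨fun x => p (D x), hpcont.comp D.continuous⟩ with hDP
    have hfixP : ∀ u : ↥U, PhiR hM ⇑DP u = DP u.1 := by
      intro u
      have h1 : PhiR hM ⇑DP u = p (∫ y, D y.1 ∂ker hM u) := by
        rw [PhiR]
        exact hpint u _ (hint u)
      rw [h1, ← ker_eq hM u hmeasD ⟨‖D‖, hbdD⟩, hfixD u]
      simp [hDP]
    have hzero : ⇑(0 : C(K, ℝ)) = fun _ : K => (0 : ℝ) := rfl
    have hb1 : ∀ x ∈ Uᶜ, DP x ≤ (0 : C(K, ℝ)) x := by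
      intro x hx
      have : p (D x) = p 0 - p 0 := by rw [← hpsub]; simp [hbdryD x hx]
      simp [hDP, this]
    have hb2 : ∀ x ∈ Uᶜ, (0 : C(K, ℝ)) x ≤ DP x := by
      intro x hx
      have : p (D x) = p 0 - p 0 := by rw [← hpsub]; simp [hbdryD x hx]
      simp [hDP, this]
    have hsup0 : ∀ w : ↥U, PhiR hM ⇑(0 : C(K, ℝ)) w ≤ (0 : C(K, ℝ)) w.1 := by
      intro w
      rw [hzero, PhiR_const hM 0 w]
    have hsub0 : ∀ w : ↥U, (0 : C(K, ℝ)) w.1 ≤ PhiR hM ⇑(0 : C(K, ℝ)) w := by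
      intro w
      rw [hzero, PhiR_const hM 0 w]
    have hle : ∀ x, DP x ≤ (0 : C(K, ℝ)) x :=
      comparison hM hB hne (fun w => le_of_eq (hfixP w).symm) hsup0 hb1
    have hge : ∀ x, (0 : C(K, ℝ)) x ≤ DP x :=
      comparison hM hB hne hsub0 (fun w => le_of_eq (hfixP w)) hb2
    intro x
    have := le_antisymm (hle x) (hge x)
    simpa [hDP] using this
  intro x
  have hre := zero_part (fun z => z.re) Complex.continuous_re (fun z w => by simp)
    (fun x gg hgg => by simpa using integral_re hgg) x
  have him := zero_part (fun z => z.im) Complex.continuous_im (fun z w => by simp)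
    (fun x gg hgg => by simpa using integral_im hgg) x
  exact Complex.ext (by simpa using hre) (by simpa using him)

end Stmt0Aux

open Stmt0Aux

/-- The map `Ψ` : `Ψ f = Φ (f_U)` on `U` and `Ψ f = f` on `∂U = K \ U`. -/
noncomputable def psiFun {K : Type*} (U : Set K)
    (Φ : (↥U → ℂ) → (↥U → ℂ)) (f : K → ℂ) : K → ℂ :=
  open Classical in fun x => if hx : x ∈ U then Φ (fun v : ↥U => f v.1) ⟨x, hx⟩ else f x

/-- For each `f ∈ C(∂U)` there exists a unique `G ∈ C(K)` with
`Φ (G_U) = G_U` on `U` and `G = f` on `∂U`. -/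
theorem stmt0 {K : Type*} [MetricSpace K] [CompactSpace K]
    [MeasurableSpace K] [BorelSpace K]
    (U : Set K) (hUopen : IsOpen U) (hUdense : Dense U)
    (hbd : ∃ a b : K, a ∈ Uᶜ ∧ b ∈ Uᶜ ∧ a ≠ b)
    (Φ : (↥U → ℂ) → (↥U → ℂ))
    (hM : IsMarkovOperator Φ) (hSF : HasStrongFeller Φ)
    (hA : CondA U Φ) (hB : CondB U Φ)
    (f : C(↥(Uᶜ), ℂ)) :
    ∃! G : C(K, ℂ),
      (∀ u : ↥U, Φ (fun v : ↥U => G v.1) u = G u.1) ∧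
      (∀ x : ↥(Uᶜ), G x.1 = f x) := by
  obtain ⟨a, b, ha, hb, hab⟩ := hbd
  have hne : ∃ a, a ∈ Uᶜ := ⟨a, ha⟩
  haveI : CompactSpace ↥(Uᶜ) := isCompact_iff_compactSpace.1 hUopen.isClosed_compl.isCompact
  set fRe : C(↥(Uᶜ), ℝ) := ⟨fun x => (f x).re, Complex.continuous_re.comp f.continuous⟩ with hfRe
  set fIm : C(↥(Uᶜ), ℝ) := ⟨fun x => (f x).im, Complex.continuous_im.comp f.continuous⟩ with hfIm
  obtain ⟨GRe, hGReFix, hGReBd⟩ := exists_real hUopen hne hM hSF hA hB fRe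
  obtain ⟨GIm, hGImFix, hGImBd⟩ := exists_real hUopen hne hM hSF hA hB fIm
  set G : C(K, ℂ) := ⟨fun x => ((GRe x : ℝ) : ℂ) + ((GIm x : ℝ) : ℂ) * Complex.I,
    ((Complex.continuous_ofReal.comp GRe.continuous).add
      ((Complex.continuous_ofReal.comp GIm.continuous).mul continuous_const))⟩ with hG
  have hGfun : (fun v : ↥U => G v.1) =
      fun v : ↥U => ((GRe v.1 : ℝ) : ℂ) + ((GIm v.1 : ℝ) : ℂ) * Complex.I := rfl
  have solG : ∀ u : ↥U, Φ (fun v : ↥U => G v.1) u = G u.1 := by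
    intro u
    haveI := ker_prob hM u
    have hint1 : Integrable (fun y : ↥U => GRe y.1) (ker hM u) :=
      integrable_ker hM u (GRe.continuous.measurable.comp measurable_subtype_coe)
        (fun y => cm_bdd GRe y.1)
    have hint2 : Integrable (fun y : ↥U => GIm y.1) (ker hM u) :=
      integrable_ker hM u (GIm.continuous.measurable.comp measurable_subtype_coe)
        (fun y => cm_bdd GIm y.1)
    have hmeasG : Measurable (fun v : ↥U =>
        ((GRe v.1 : ℝ) : ℂ) + ((GIm v.1 : ℝ) : ℂ) * Complex.I) :=
      (meas_cmp GRe.continuous.measurable).add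
        ((meas_cmp GIm.continuous.measurable).mul_const _)
    have hbdG : ∀ v : ↥U, ‖((GRe v.1 : ℝ) : ℂ) + ((GIm v.1 : ℝ) : ℂ) * Complex.I‖ ≤
        ‖GRe‖ + ‖GIm‖ := by
      intro v
      calc ‖((GRe v.1 : ℝ) : ℂ) + ((GIm v.1 : ℝ) : ℂ) * Complex.I‖
          ≤ ‖((GRe v.1 : ℝ) : ℂ)‖ + ‖((GIm v.1 : ℝ) : ℂ) * Complex.I‖ := norm_add_le _ _
        _ = |GRe v.1| + |GIm v.1| := by
            simp [Complex.norm_real, Real.norm_eq_abs]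
        _ ≤ ‖GRe‖ + ‖GIm‖ := add_le_add (cm_bdd GRe v.1) (cm_bdd GIm v.1)
    have hint1' : Integrable (fun y : ↥U => ((GRe y.1 : ℝ) : ℂ)) (ker hM u) := by
      simpa using hint1.ofReal (𝕜 := ℂ)
    have hint2' : Integrable (fun y : ↥U => ((GIm y.1 : ℝ) : ℂ)) (ker hM u) := by
      simpa using hint2.ofReal (𝕜 := ℂ)
    rw [hGfun, ker_eq hM u hmeasG ⟨‖GRe‖ + ‖GIm‖, hbdG⟩,
      integral_add hint1' (hint2'.mul_const Complex.I),
      integral_mul_const, integral_cmp hM u, integral_cmp hM u,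
      hGReFix u, hGImFix u]
    rfl
  have bdryG : ∀ x : ↥(Uᶜ), G x.1 = f x := by
    intro x
    have h1 : GRe x.1 = (f x).re := hGReBd x
    have h2 : GIm x.1 = (f x).im := hGImBd x
    apply Complex.ext
    · simpa [hG] using h1
    · simpa [hG] using h2
  refine ⟨G, ⟨solG, bdryG⟩, ?_⟩
  rintro G' ⟨solG', bdryG'⟩
  have hfixD : ∀ u : ↥U, Φ (fun v : ↥U => (G' - G) v.1) u = (G' - G) u.1 := by
    intro u
    haveI := ker_prob hM u
    have hintG : Integrable (fun y : ↥U => G y.1) (ker hM u) :=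
      (integrable_const ‖G‖).mono'
        ((G.continuous.measurable.comp measurable_subtype_coe).aestronglyMeasurable)
        (Eventually.of_forall fun y => G.norm_coe_le_norm y.1)
    have hintG' : Integrable (fun y : ↥U => G' y.1) (ker hM u) :=
      (integrable_const ‖G'‖).mono'
        ((G'.continuous.measurable.comp measurable_subtype_coe).aestronglyMeasurable)
        (Eventually.of_forall fun y => G'.norm_coe_le_norm y.1)
    have hfun : (fun v : ↥U => (G' - G) v.1) = fun v : ↥U => G' v.1 - G v.1 := by
      funext v; simp
    have hmeasD : Measurable (fun v : ↥U => G' v.1 - G v.1) :=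
      (G'.continuous.measurable.comp measurable_subtype_coe).sub
        (G.continuous.measurable.comp measurable_subtype_coe)
    have hbdD : ∀ v : ↥U, ‖G' v.1 - G v.1‖ ≤ ‖G'‖ + ‖G‖ := fun v =>
      le_trans (norm_sub_le _ _) (add_le_add (G'.norm_coe_le_norm v.1) (G.norm_coe_le_norm v.1))
    rw [hfun, ker_eq hM u hmeasD ⟨‖G'‖ + ‖G‖, hbdD⟩, integral_sub hintG' hintG,
      ← ker_eq hM u (f := fun y : ↥U => G' y.1)
        (G'.continuous.measurable.comp measurable_subtype_coe)
        ⟨‖G'‖, fun y => G'.norm_coe_le_norm y.1⟩,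
      ← ker_eq hM u (f := fun y : ↥U => G y.1)
        (G.continuous.measurable.comp measurable_subtype_coe)
        ⟨‖G‖, fun y => G.norm_coe_le_norm y.1⟩,
      solG' u, solG u]
    simp
  have hbdryD : ∀ x ∈ Uᶜ, (G' - G) x = 0 := by
    intro x hx
    have h1 : G' x = f ⟨x, hx⟩ := bdryG' ⟨x, hx⟩
    have h2 : G x = f ⟨x, hx⟩ := bdryG ⟨x, hx⟩
    simp [h1, h2]
  have hzero := unique_zero hM hB hne hfixD hbdryD
  ext x
  have := hzero x
  simp only [ContinuousMap.sub_apply, sub_eq_zero] at this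
  exact this
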